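/- arXiv:0907.3574 — 2 statements merged into one kernel-verified Lean document; each statement's English description precedes it below -/
import Mathlib

section
/- For the box nonlinearity η(u) = sign(u)·min(|u|,1) and X supported on [−1,1] with P(X ∉ {−1,+1}) ≤ ρδ, the derivative of the MSE map Ψ(σ²) = E[(η(X+(σ/√δ)Z) − X)²] with respect to σ², evaluated in the limit σ² ↓ 0, equals (1+ρδ)/(2δ). -/
open MeasureTheory Set Filter Topology

/-- Standard Gaussian density. -/
noncomputable def gaussPhi (z : ℝ) : ℝ := Real.exp (-z ^ 2 / 2) / Real.sqrt (2 * Real.pi)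

/-- Standard Gaussian CDF. -/
noncomputable def gaussPhiCDF (z : ℝ) : ℝ := ∫ t in Set.Iic z, gaussPhi t

lemma gaussPhi_eq (z : ℝ) : gaussPhi z = (Real.sqrt (2 * Real.pi))⁻¹ * Real.exp (-(1/2) * z ^ 2) := by
  rw [gaussPhi, div_eq_inv_mul, mul_comm]
  ring_nf

lemma integrable_gaussPhi : Integrable gaussPhi := by
  simp_rw [funext gaussPhi_eq]
  exact (integrable_exp_neg_mul_sq (by norm_num : (0:ℝ) < 1/2)).const_mul _

lemma integral_gaussPhi : ∫ z, gaussPhi z = 1 := by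
  simp_rw [funext gaussPhi_eq]
  rw [integral_const_mul, integral_gaussian]
  rw [inv_mul_eq_div, div_eq_one_iff_eq (by positivity)]
  rw [show Real.pi / (1/2) = 2 * Real.pi by ring]

lemma gaussPhi_nonneg (z : ℝ) : 0 ≤ gaussPhi z := by
  rw [gaussPhi_eq]; positivity

lemma gaussPhiCDF_mono : Monotone gaussPhiCDF := fun a b hab =>
  setIntegral_mono_set integrable_gaussPhi.integrableOn
    (Filter.Eventually.of_forall gaussPhi_nonneg) (HasSubset.Subset.eventuallyLE (Iic_subset_Iic.mpr hab))

lemma gaussPhiCDF_nonneg (z : ℝ) : 0 ≤ gaussPhiCDF z :=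
  setIntegral_nonneg measurableSet_Iic fun t _ => gaussPhi_nonneg t

lemma gaussPhiCDF_le_one (z : ℝ) : gaussPhiCDF z ≤ 1 := by
  rw [← integral_gaussPhi]
  exact setIntegral_le_integral integrable_gaussPhi (Filter.Eventually.of_forall gaussPhi_nonneg)

lemma gaussPhiCDF_neg (z : ℝ) : gaussPhiCDF (-z) = 1 - gaussPhiCDF z := by
  have heven : ∀ t : ℝ, gaussPhi (-t) = gaussPhi t := by intro t; simp [gaussPhi]
  have h1 : gaussPhiCDF (-z) = ∫ t in Set.Ici z, gaussPhi t := by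
    rw [gaussPhiCDF]
    rw [show (∫ t in Set.Iic (-z), gaussPhi t) = ∫ t in Set.Iic (-z), gaussPhi (-t) by
      simp_rw [heven]]
    rw [integral_comp_neg_Iic]
    rw [neg_neg]
    exact setIntegral_congr_set Ioi_ae_eq_Ici
  have h2 : (∫ t in Set.Iio z, gaussPhi t) + ∫ t in Set.Ici z, gaussPhi t = 1 := by
    rw [intervalIntegral.integral_Iio_add_Ici integrable_gaussPhi.integrableOn
      integrable_gaussPhi.integrableOn, integral_gaussPhi]
  have h3 : (∫ t in Set.Iio z, gaussPhi t) = gaussPhiCDF z := by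
    rw [gaussPhiCDF]
    exact setIntegral_congr_set Iio_ae_eq_Iic
  linarith [h1, h2, h3]

lemma gaussPhiCDF_zero : gaussPhiCDF 0 = 1/2 := by
  have := gaussPhiCDF_neg 0
  rw [neg_zero] at this; linarith

lemma gaussPhiCDF_atTop : Tendsto gaussPhiCDF atTop (𝓝 1) := by
  have := tendsto_setIntegral_of_monotone (μ := volume) (f := gaussPhi)
    (s := fun z : ℝ => Set.Iic z) (fun i => measurableSet_Iic)
    (fun a b hab => Iic_subset_Iic.mpr hab)
    (by rw [Set.iUnion_Iic]; exact integrable_gaussPhi.integrableOn)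
  rwa [Set.iUnion_Iic, setIntegral_univ, integral_gaussPhi] at this

lemma gaussPhiCDF_atBot : Tendsto gaussPhiCDF atBot (𝓝 0) := by
  have h : Tendsto (fun z : ℝ => 1 - gaussPhiCDF (-z)) atBot (𝓝 0) := by
    have : Tendsto (fun z : ℝ => gaussPhiCDF (-z)) atBot (𝓝 1) :=
      gaussPhiCDF_atTop.comp tendsto_neg_atBot_atTop
    have h2 := Filter.Tendsto.sub (tendsto_const_nhds (α := ℝ) (x := (1:ℝ)) (f := atBot)) this
    simpa using h2
  refine h.congr fun z => ?_
  rw [gaussPhiCDF_neg]; ring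

lemma gaussPhiCDF_measurable : Measurable gaussPhiCDF := gaussPhiCDF_mono.measurable

theorem box_mse_map_deriv_limit
    {Ω : Type*} [MeasurableSpace Ω] (μ : Measure Ω) [IsProbabilityMeasure μ]
    (X : Ω → ℝ) (hX : Measurable X)
    (δ ρ : ℝ) (hδ : δ ∈ Set.Ioo (0:ℝ) 1) (hρ : ρ ∈ Set.Ioo (0:ℝ) 1)
    (hsupp : ∀ ω, X ω ∈ Set.Icc (-1 : ℝ) 1)
    (hmass : μ {ω | X ω ≠ 1 ∧ X ω ≠ -1} = ENNReal.ofReal (ρ * δ)) :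
    Filter.Tendsto
      (fun σ : ℝ => (1 / δ) *
        ∫ ω, (gaussPhiCDF ((Real.sqrt δ / σ) * (1 - X ω))
              - gaussPhiCDF (-(Real.sqrt δ / σ) * (1 + X ω))) ∂μ)
      (nhdsWithin 0 (Set.Ioi 0))
      (nhds ((1 + ρ * δ) / (2 * δ))) := by
  obtain ⟨hδ0, hδ1⟩ := hδ
  obtain ⟨hρ0, hρ1⟩ := hρ
  set S : Set Ω := {ω | X ω ≠ 1 ∧ X ω ≠ -1} with hSdef
  have hSmeas : MeasurableSet S := by
    have h1 : MeasurableSet {ω | X ω ≠ 1} := (hX (measurableSet_singleton 1)).compl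
    have h2 : MeasurableSet {ω | X ω ≠ -1} := (hX (measurableSet_singleton (-1))).compl
    exact h1.inter h2
  set g : Ω → ℝ := fun ω => (1/2 : ℝ) + (1/2) * S.indicator (fun _ => (1:ℝ)) ω with hgdef
  have hc : Tendsto (fun σ : ℝ => Real.sqrt δ / σ) (𝓝[>] 0) atTop := by
    simp_rw [div_eq_mul_inv]
    exact tendsto_inv_nhdsGT_zero.const_mul_atTop (Real.sqrt_pos.mpr hδ0)
  -- dominated convergence
  have hmain : Tendsto
      (fun σ : ℝ => ∫ ω, (gaussPhiCDF ((Real.sqrt δ / σ) * (1 - X ω))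
              - gaussPhiCDF (-(Real.sqrt δ / σ) * (1 + X ω))) ∂μ)
      (𝓝[>] 0) (𝓝 (∫ ω, g ω ∂μ)) := by
    apply tendsto_integral_filter_of_dominated_convergence (fun _ => (1:ℝ))
    · refine Filter.Eventually.of_forall fun σ => ?_
      exact ((gaussPhiCDF_measurable.comp ((measurable_const.sub hX).const_mul _)).sub
        (gaussPhiCDF_measurable.comp ((measurable_const.add hX).const_mul _))).aestronglyMeasurable
    · refine Filter.Eventually.of_forall fun σ => Filter.Eventually.of_forall fun ω => ?_
      rw [Real.norm_eq_abs, abs_le]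
      constructor
      · linarith [gaussPhiCDF_le_one (-(Real.sqrt δ / σ) * (1 + X ω)),
          gaussPhiCDF_nonneg ((Real.sqrt δ / σ) * (1 - X ω))]
      · linarith [gaussPhiCDF_nonneg (-(Real.sqrt δ / σ) * (1 + X ω)),
          gaussPhiCDF_le_one ((Real.sqrt δ / σ) * (1 - X ω))]
    · exact integrable_const 1
    · refine Filter.Eventually.of_forall fun ω => ?_
      obtain ⟨hXlo, hXhi⟩ := hsupp ω
      by_cases h1 : X ω = 1
      · -- X ω = 1 : limit 1/2 - 0
        have hgω : g ω = 1/2 := by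
          have : ω ∉ S := by simp [hSdef, h1]
          simp [hgdef, Set.indicator_of_notMem this]
        rw [hgω]
        have ha : Tendsto (fun σ : ℝ => gaussPhiCDF ((Real.sqrt δ / σ) * (1 - X ω)))
            (𝓝[>] 0) (𝓝 (1/2)) := by
          simp only [h1, sub_self, mul_zero, gaussPhiCDF_zero]
          exact tendsto_const_nhds
        have hb : Tendsto (fun σ : ℝ => gaussPhiCDF (-(Real.sqrt δ / σ) * (1 + X ω)))
            (𝓝[>] 0) (𝓝 0) := by
          have harg : Tendsto (fun σ : ℝ => -(Real.sqrt δ / σ) * (1 + X ω)) (𝓝[>] 0) atBot := by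
            have : Tendsto (fun σ : ℝ => (Real.sqrt δ / σ) * (1 + X ω)) (𝓝[>] 0) atTop :=
              hc.atTop_mul_const (by rw [h1]; norm_num)
            exact (tendsto_neg_atTop_atBot.comp this).congr fun σ => by
              simp only [Function.comp_apply]; ring
          exact gaussPhiCDF_atBot.comp harg
        simpa using ha.sub hb
      · by_cases h2 : X ω = -1
        · -- X ω = -1 : limit 1 - 1/2
          have hgω : g ω = 1/2 := by
            have : ω ∉ S := by simp [hSdef, h2]
            simp [hgdef, Set.indicator_of_notMem this]
          rw [hgω]
          have ha : Tendsto (fun σ : ℝ => gaussPhiCDF ((Real.sqrt δ / σ) * (1 - X ω)))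
              (𝓝[>] 0) (𝓝 1) := by
            have harg : Tendsto (fun σ : ℝ => (Real.sqrt δ / σ) * (1 - X ω)) (𝓝[>] 0) atTop :=
              hc.atTop_mul_const (by rw [h2]; norm_num)
            exact gaussPhiCDF_atTop.comp harg
          have hb : Tendsto (fun σ : ℝ => gaussPhiCDF (-(Real.sqrt δ / σ) * (1 + X ω)))
              (𝓝[>] 0) (𝓝 (1/2)) := by
            simp only [h2, add_neg_cancel, mul_zero, gaussPhiCDF_zero]
            exact tendsto_const_nhds
          have := ha.sub hb
          norm_num at this ⊢
          exact this
        · -- interior : limit 1 - 0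
          have hgω : g ω = 1 := by
            have : ω ∈ S := ⟨h1, h2⟩
            simp only [hgdef, Set.indicator_of_mem this]
            norm_num
          rw [hgω]
          have ha : Tendsto (fun σ : ℝ => gaussPhiCDF ((Real.sqrt δ / σ) * (1 - X ω)))
              (𝓝[>] 0) (𝓝 1) := by
            have harg : Tendsto (fun σ : ℝ => (Real.sqrt δ / σ) * (1 - X ω)) (𝓝[>] 0) atTop :=
              hc.atTop_mul_const (by cases lt_or_eq_of_le hXhi with
                | inl h => linarith
                | inr h => exact absurd h h1)
            exact gaussPhiCDF_atTop.comp harg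
          have hb : Tendsto (fun σ : ℝ => gaussPhiCDF (-(Real.sqrt δ / σ) * (1 + X ω)))
              (𝓝[>] 0) (𝓝 0) := by
            have harg : Tendsto (fun σ : ℝ => -(Real.sqrt δ / σ) * (1 + X ω)) (𝓝[>] 0) atBot := by
              have : Tendsto (fun σ : ℝ => (Real.sqrt δ / σ) * (1 + X ω)) (𝓝[>] 0) atTop :=
                hc.atTop_mul_const (by cases lt_or_eq_of_le hXlo with
                  | inl h => linarith
                  | inr h => exact absurd h.symm h2)
              exact (tendsto_neg_atTop_atBot.comp this).congr fun σ => by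
                simp only [Function.comp_apply]; ring
            exact gaussPhiCDF_atBot.comp harg
          simpa using ha.sub hb
  -- value of the limit integral
  have hgint : ∫ ω, g ω ∂μ = (1 + ρ * δ) / 2 := by
    have hind : Integrable (S.indicator (fun _ => (1:ℝ))) μ :=
      (integrable_const (1:ℝ)).indicator hSmeas
    rw [hgdef]
    simp only
    rw [integral_add (integrable_const _) (hind.const_mul _), integral_const,
      integral_const_mul, integral_indicator hSmeas]
    simp only [measure_univ, ENNReal.toReal_one, smul_eq_mul, one_mul]
    rw [setIntegral_const, smul_eq_mul, mul_one, probReal_univ, measureReal_def μ S, hmass,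
      ENNReal.toReal_ofReal (by positivity)]
    ring
  rw [hgint] at hmain
  have hfinal := hmain.const_mul (1/δ)
  have : (1/δ) * ((1 + ρ * δ) / 2) = (1 + ρ * δ) / (2 * δ) := by
    ring
  rwa [this] at hfinal
end

section
/- Let F_ε denote distributions F on ℝ with P_F(X ≠ 0) ≤ ε, and let M*(ε) = inf_λ sup_{F ∈ F_ε} E_F[(η(X+Z;λ) − X)²] with soft thresholding. Then for each δ ∈ (0,1), ρ < ρ_SE(δ) if and only if M*(δρ) < δ, where ρ_SE(δ) = sup{ρ : Ψ(σ²) < σ² for all σ² ∈ (0, E X²], for all F ∈ F_{ρδ}, for the optimal λ}. Consequently M*(ρδ) = δ exactly at ρ = ρ_SE(δ). -/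
open MeasureTheory ProbabilityTheory Set Real Filter
open scoped ENNReal NNReal Topology

noncomputable def softThresh (x θ : ℝ) : ℝ := Real.sign x * max (|x| - θ) 0


noncomputable def clampR (θ t : ℝ) : ℝ := max (-θ) (min θ t)

lemma clampR_le {θ : ℝ} (hθ : 0 ≤ θ) (t : ℝ) : clampR θ t ≤ θ :=
  max_le (by linarith) (min_le_left _ _)

lemma neg_le_clampR (θ t : ℝ) : -θ ≤ clampR θ t := le_max_left _ _

lemma softThresh_eq {θ : ℝ} (hθ : 0 ≤ θ) (t : ℝ) : softThresh t θ = t - clampR θ t := by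
  unfold softThresh clampR
  rcases lt_trichotomy t 0 with h | h | h
  · rw [Real.sign_of_neg h, abs_of_neg h]
    rcases le_or_gt (-θ) t with h2 | h2
    · rw [min_eq_right (by linarith), max_eq_right h2, max_eq_right (by linarith)]; ring
    · rw [min_eq_right (by linarith), max_eq_left h2.le, max_eq_left (by linarith)]; ring
  · subst h
    simp [Real.sign_zero, min_eq_right hθ, max_eq_right (neg_nonpos.mpr hθ)]
  · rw [Real.sign_of_pos h, abs_of_pos h]
    rcases le_or_gt t θ with h2 | h2
    · rw [min_eq_right h2, max_eq_right (by linarith), max_eq_right (by linarith)]; ring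
    · rw [min_eq_left h2.le, max_eq_left (by linarith), max_eq_right (by linarith)]; ring

lemma clampR_mono {θ : ℝ} {s t : ℝ} (h : s ≤ t) : clampR θ s ≤ clampR θ t := by
  unfold clampR
  exact max_le_max le_rfl (min_le_min le_rfl h)

lemma clampR_lipschitz {θ : ℝ} (s t : ℝ) : |clampR θ s - clampR θ t| ≤ |s - t| := by
  unfold clampR
  rw [max_comm (-θ) (min θ s), max_comm (-θ) (min θ t)]
  refine (abs_max_sub_max_le_abs _ _ _).trans ?_
  refine (abs_min_sub_min_le_max θ s θ t).trans ?_
  simp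

lemma softThresh_continuous {θ : ℝ} (hθ : 0 ≤ θ) : Continuous fun t => softThresh t θ := by
  have : (fun t => softThresh t θ) = fun t => t - clampR θ t := funext fun t => softThresh_eq hθ t
  rw [this]
  exact continuous_id.sub ((continuous_const.max (continuous_const.min continuous_id)))

lemma softThresh_continuous_param (u : ℝ) : Continuous fun θ => softThresh u θ := by
  unfold softThresh
  exact continuous_const.mul ((continuous_const.sub continuous_id).max continuous_const)

lemma softThresh_sub_abs_le {θ : ℝ} (hθ : 0 ≤ θ) (x z : ℝ) :
    |softThresh (x + z) θ - x| ≤ |z| + θ := by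
  rw [softThresh_eq hθ]
  have h1 := clampR_le hθ (x + z)
  have h2 := neg_le_clampR θ (x + z)
  rw [abs_le]; cases abs_le.mp (le_refl |z|) <;> constructor <;> linarith [neg_abs_le z, le_abs_self z]

lemma softThresh_scale {θ c : ℝ} (hθ : 0 ≤ θ) (hc : 0 < c) (u : ℝ) :
    softThresh (c * u) (c * θ) = c * softThresh u θ := by
  rw [softThresh_eq (by positivity), softThresh_eq hθ]
  unfold clampR
  rw [mul_sub]
  congr 1
  rw [← mul_neg c θ]
  rw [max_comm, max_comm (-θ) _, ← mul_min_of_nonneg _ _ hc.le, ← mul_max_of_nonneg _ _ hc.le]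

lemma softThresh_zero (u : ℝ) : softThresh u 0 = u := by
  unfold softThresh
  rw [sub_zero, max_eq_left (abs_nonneg u)]
  rcases lt_trichotomy u 0 with h | h | h
  · rw [Real.sign_of_neg h, abs_of_neg h]; ring
  · simp [h]
  · rw [Real.sign_of_pos h, abs_of_pos h]; ring

lemma softThresh_sq_le {θ : ℝ} (hθ : 0 ≤ θ) (z : ℝ) : (softThresh z θ) ^ 2 ≤ z ^ 2 := by
  rw [softThresh_eq hθ]
  have h1 := clampR_le hθ z
  have h2 := neg_le_clampR θ z
  rcases le_total 0 z with hz | hz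
  · have hw0 : 0 ≤ clampR θ z := by
      unfold clampR; exact le_max_of_le_right (le_min hθ hz)
    have hwz : clampR θ z ≤ z := by
      unfold clampR; exact max_le (by linarith) (min_le_right _ _)
    nlinarith
  · have hw0 : clampR θ z ≤ 0 := by
      unfold clampR; exact max_le (by linarith) (le_trans (min_le_right _ _) hz)
    have hwz : z ≤ clampR θ z := by
      unfold clampR
      refine le_max_of_le_right (le_min (by linarith) le_rfl)
    nlinarith

lemma key_ineq_aux {θ : ℝ} (hθ : 0 ≤ θ) (x z : ℝ) (hz : 0 ≤ z) :
    (softThresh (x + z) θ - x) ^ 2 + (softThresh (x - z) θ - x) ^ 2 ≤ 2 * (z ^ 2 + θ ^ 2) := by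
  rw [softThresh_eq hθ, softThresh_eq hθ]
  set a := clampR θ (x + z) with ha
  set b := clampR θ (x - z) with hb
  have hba : b ≤ a := clampR_mono (by linarith)
  have hlip : a - b ≤ 2 * z := by
    have := clampR_lipschitz (θ := θ) (x + z) (x - z)
    rw [abs_of_nonneg (by linarith : (0:ℝ) ≤ a - b)] at this
    have h2 : |x + z - (x - z)| = 2 * z := by rw [abs_of_nonneg (by linarith)]; ring
    linarith [this.trans_eq h2]
  have haθ := clampR_le hθ (x + z)
  have haθ' := neg_le_clampR θ (x + z)
  have hbθ := clampR_le hθ (x - z)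
  have hbθ' := neg_le_clampR θ (x - z)
  nlinarith [mul_nonneg (sub_nonneg.mpr hba) (sub_nonneg.mpr (hlip.trans_eq' rfl)),
    mul_nonneg (sub_nonneg.mpr haθ) (sub_nonneg.mpr hbθ'),
    mul_nonneg (sub_nonneg.mpr hbθ) (sub_nonneg.mpr haθ')]

lemma key_ineq {θ : ℝ} (hθ : 0 ≤ θ) (x z : ℝ) :
    (softThresh (x + z) θ - x) ^ 2 + (softThresh (x - z) θ - x) ^ 2 ≤ 2 * (z ^ 2 + θ ^ 2) := by
  rcases le_total 0 z with hz | hz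
  · exact key_ineq_aux hθ x z hz
  · have := key_ineq_aux hθ x (-z) (by linarith)
    have e1 : x + -z = x - z := by ring
    have e2 : x - -z = x + z := by ring
    rw [e1, e2] at this
    have e3 : (-z) ^ 2 = z ^ 2 := by ring
    rw [e3] at this
    linarith

lemma key_strict {θ : ℝ} (hθ : 0 < θ) (x : ℝ) :
    (softThresh (x + x) θ - x) ^ 2 < x ^ 2 + 2 * θ ^ 2 := by
  rw [softThresh_eq hθ.le]
  set w := clampR θ (x + x) with hw
  have h1 := clampR_le hθ.le (x + x)
  have h2 := neg_le_clampR θ (x + x)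
  have hxw : 0 ≤ x * w := by
    rcases le_total 0 x with hx | hx
    · refine mul_nonneg hx ?_
      rw [hw]; unfold clampR
      exact le_max_of_le_right (le_min hθ.le (by linarith))
    · have hw0 : w ≤ 0 := by
        rw [hw]; unfold clampR
        exact max_le (by linarith) (le_trans (min_le_right _ _) (by linarith))
      nlinarith
  nlinarith

noncomputable def stdGauss : Measure ℝ := gaussianReal 0 1


instance : IsProbabilityMeasure stdGauss := by unfold stdGauss; infer_instance

lemma stdGauss_eq : stdGauss =
    (volume : Measure ℝ).withDensity (fun x => ((gaussianPDFReal 0 1 x).toNNReal : ℝ≥0∞)) := by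
  rw [stdGauss, gaussianReal_of_var_ne_zero _ one_ne_zero]; rfl

lemma pdf_meas : Measurable (fun x => (gaussianPDFReal 0 1 x).toNNReal) :=
  (measurable_gaussianPDFReal 0 1).stronglyMeasurable.real_toNNReal.measurable

lemma integral_stdGauss_eq (g : ℝ → ℝ) :
    ∫ z, g z ∂stdGauss = ∫ z, gaussianPDFReal 0 1 z * g z := by
  rw [stdGauss_eq, integral_withDensity_eq_integral_smul₀ pdf_meas.aemeasurable]
  congr 1; funext z
  rw [NNReal.smul_def, smul_eq_mul, Real.coe_toNNReal _ (gaussianPDFReal_nonneg 0 1 z)]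

lemma integrable_stdGauss_iff (g : ℝ → ℝ) :
    Integrable g stdGauss ↔ Integrable (fun z => gaussianPDFReal 0 1 z * g z) volume := by
  rw [stdGauss_eq, integrable_withDensity_iff_integrable_smul₀ pdf_meas.aemeasurable]
  constructor <;> intro h <;> refine h.congr (ae_of_all _ fun z => ?_) <;>
    simp only [NNReal.smul_def, smul_eq_mul,
      Real.coe_toNNReal _ (gaussianPDFReal_nonneg 0 1 z)]

lemma pdf_eq (z : ℝ) : gaussianPDFReal 0 1 z = (Real.sqrt (2 * π))⁻¹ * Real.exp (-z ^ 2 / 2) := by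
  unfold gaussianPDFReal
  norm_num

lemma rpow_two_eq (x : ℝ) : x ^ (2 : ℝ) = x ^ 2 := by
  rw [show (2 : ℝ) = ((2 : ℕ) : ℝ) by norm_num, Real.rpow_natCast]

lemma integrable_sq_stdGauss : Integrable (fun z : ℝ => z ^ 2) stdGauss := by
  rw [integrable_stdGauss_iff]
  have h := (integrable_rpow_mul_exp_neg_mul_sq (by norm_num : (0:ℝ) < 1/2)
    (by norm_num : (-1:ℝ) < 2)).const_mul (Real.sqrt (2 * π))⁻¹
  refine h.congr (ae_of_all _ fun z => ?_)
  simp only [pdf_eq, rpow_two_eq]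
  ring

lemma sqrt_two_pi_pos : (0:ℝ) < Real.sqrt (2 * π) := Real.sqrt_pos.mpr (by positivity)

lemma integral_sq_stdGauss : ∫ z, z ^ 2 ∂stdGauss = 1 := by
  rw [integral_stdGauss_eq]
  have e : (fun z : ℝ => gaussianPDFReal 0 1 z * z ^ 2)
      = fun z : ℝ => (Real.sqrt (2 * π))⁻¹ * ((fun t : ℝ => t ^ 2 * Real.exp (-t ^ 2 / 2)) z) := by
    funext z; rw [pdf_eq]; ring
  rw [e, integral_const_mul]
  have habs : ∫ z : ℝ, z ^ 2 * Real.exp (-z ^ 2 / 2)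
      = 2 * ∫ z in Ioi (0:ℝ), z ^ 2 * Real.exp (-z ^ 2 / 2) := by
    rw [← integral_comp_abs (f := fun t : ℝ => t ^ 2 * Real.exp (-t ^ 2 / 2))]
    congr 1; funext z; rw [sq_abs]
  have hIoi : ∫ z in Ioi (0:ℝ), z ^ 2 * Real.exp (-z ^ 2 / 2)
      = ((1:ℝ)/2) ^ (-((2:ℝ) + 1) / 2) * (1 / 2) * Real.Gamma (((2:ℝ) + 1) / 2) := by
    rw [← integral_rpow_mul_exp_neg_mul_rpow (by norm_num : (0:ℝ) < 2)
      (by norm_num : (-1:ℝ) < 2) (by norm_num : (0:ℝ) < 1/2)]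
    refine setIntegral_congr_fun measurableSet_Ioi fun z _ => ?_
    rw [rpow_two_eq]
    ring_nf
  have hGamma : Real.Gamma (((2:ℝ) + 1) / 2) = Real.sqrt π / 2 := by
    rw [show ((2:ℝ) + 1) / 2 = 1/2 + 1 by norm_num,
      Real.Gamma_add_one (by norm_num : (1/2 : ℝ) ≠ 0), Real.Gamma_one_half_eq]
    ring
  have hrpow : ((1:ℝ)/2) ^ (-((2:ℝ) + 1) / 2) = 2 * Real.sqrt 2 := by
    have h1 : ((1:ℝ)/2) ^ (-((2:ℝ) + 1) / 2) = (2:ℝ) ^ (((2:ℝ) + 1) / 2) := by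
      rw [show ((1:ℝ)/2) = 2⁻¹ by norm_num,
        Real.inv_rpow (by norm_num : (0:ℝ) ≤ 2), ← Real.rpow_neg (by norm_num : (0:ℝ) ≤ 2)]
      congr 1; ring
    rw [h1, show ((2:ℝ) + 1)/2 = 1 + 1/2 by norm_num,
      Real.rpow_add (by norm_num : (0:ℝ) < 2), Real.rpow_one, ← Real.sqrt_eq_rpow]
  rw [habs, hIoi, hGamma, hrpow]
  rw [show (2:ℝ) * (2 * Real.sqrt 2 * (1/2) * (Real.sqrt π / 2)) = Real.sqrt 2 * Real.sqrt π by ring,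
    ← Real.sqrt_mul (by norm_num : (0:ℝ) ≤ 2)]
  field_simp

lemma integrable_of_bound {G : ℝ → ℝ} (hG : Continuous G) (a b : ℝ)
    (hb : ∀ z, |G z| ≤ a * z ^ 2 + b) : Integrable G stdGauss := by
  have h1 : Integrable (fun z : ℝ => a * z ^ 2 + b) stdGauss :=
    (integrable_sq_stdGauss.const_mul a).add (integrable_const b)
  exact h1.mono' hG.aestronglyMeasurable (ae_of_all _ fun z => by
    simpa [Real.norm_eq_abs] using hb z)

lemma integrable_id_stdGauss : Integrable (fun z : ℝ => z) stdGauss :=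
  integrable_of_bound continuous_id 1 1 fun z => by nlinarith [sq_abs z, abs_nonneg z, sq_nonneg (|z| - 1)]

lemma map_neg_stdGauss : Measure.map (fun z : ℝ => -z) stdGauss = stdGauss := by
  have h := gaussianReal_map_const_mul (μ := 0) (v := 1) (-1)
  have e : (fun z : ℝ => -z) = fun z : ℝ => (-1) * z := by funext z; ring
  rw [stdGauss, e]
  rw [show (fun z : ℝ => (-1 : ℝ) * z) = ((-1 : ℝ) * ·) from rfl, h]
  congr 1
  · ring
  · ext
    norm_num

lemma integral_comp_neg_stdGauss (g : ℝ → ℝ) (hg : AEStronglyMeasurable g stdGauss) :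
    ∫ z, g (-z) ∂stdGauss = ∫ z, g z ∂stdGauss := by
  have h := integral_map (μ := stdGauss) (φ := fun z : ℝ => -z) measurable_neg.aemeasurable
      (f := g) (by rw [map_neg_stdGauss]; exact hg)
  rw [map_neg_stdGauss] at h
  exact h.symm

lemma integral_id_stdGauss : ∫ z, z ∂stdGauss = 0 := by
  have h := integral_comp_neg_stdGauss (fun z => z) aestronglyMeasurable_id
  rw [integral_neg] at h
  linarith

lemma integral_sub_sq_stdGauss (θ : ℝ) : ∫ z, (z - θ) ^ 2 ∂stdGauss = 1 + θ ^ 2 := by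
  have e : (fun z : ℝ => (z - θ) ^ 2) = fun z : ℝ => (z ^ 2 - (2 * θ) * z) + θ ^ 2 := by
    funext z; ring
  have h2 : Integrable (fun z : ℝ => 2 * θ * z) stdGauss := integrable_id_stdGauss.const_mul _
  have h1 : Integrable (fun z : ℝ => z ^ 2 - 2 * θ * z) stdGauss := by
    exact integrable_sq_stdGauss.sub h2
  rw [e, integral_add h1 (integrable_const _), integral_sub integrable_sq_stdGauss h2,
    integral_const_mul, integral_sq_stdGauss, integral_id_stdGauss, integral_const]
  simp

lemma integral_sq_add_stdGauss (θ : ℝ) : ∫ z, (z ^ 2 + θ ^ 2) ∂stdGauss = 1 + θ ^ 2 := by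
  rw [integral_add integrable_sq_stdGauss (integrable_const _), integral_sq_stdGauss, integral_const]
  simp

lemma volume_ac_stdGauss : (volume : Measure ℝ) ≪ stdGauss := by
  rw [stdGauss]
  exact gaussianReal_absolutelyContinuous' 0 one_ne_zero

/-! ### The one-dimensional risk function -/

noncomputable def Hh (θ x : ℝ) : ℝ := ∫ z, (softThresh (x + z) θ - x) ^ 2 ∂stdGauss

lemma measurable_sign_real : Measurable Real.sign := by
  unfold Real.sign
  refine Measurable.ite (measurableSet_lt measurable_id measurable_const) measurable_const ?_
  exact Measurable.ite (measurableSet_lt measurable_const measurable_id) measurable_const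
    measurable_const

lemma measurable_softThresh (θ : ℝ) : Measurable fun u => softThresh u θ := by
  unfold softThresh
  exact measurable_sign_real.mul ((measurable_id.abs.sub measurable_const).max measurable_const)

lemma softThresh_abs_le (u θ : ℝ) : |softThresh u θ| ≤ |u| + |θ| := by
  unfold softThresh
  rw [abs_mul]
  have h1 : |Real.sign u| ≤ 1 := by
    rcases Real.sign_apply_eq u with h | h | h <;> rw [h] <;> norm_num
  have h2 : |max (|u| - θ) 0| ≤ |u| + |θ| := by
    rw [abs_of_nonneg (le_max_right _ _)]
    refine max_le ?_ (by positivity)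
    cases abs_le.mp (le_refl |θ|) <;> linarith [le_abs_self θ, neg_abs_le θ]
  calc |Real.sign u| * |max (|u| - θ) 0| ≤ 1 * (|u| + |θ|) :=
        mul_le_mul h1 h2 (abs_nonneg _) one_pos.le
  _ = |u| + |θ| := one_mul _

lemma integrand_cont {θ : ℝ} (hθ : 0 ≤ θ) (x : ℝ) :
    Continuous fun z => (softThresh (x + z) θ - x) ^ 2 := by
  have h0 : Continuous fun z : ℝ => x + z := continuous_const.add continuous_id
  have h : Continuous fun z : ℝ => softThresh (x + z) θ := (softThresh_continuous hθ).comp h0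
  exact (h.sub continuous_const).pow 2

lemma integrand_cont' {θ : ℝ} (hθ : 0 ≤ θ) (x : ℝ) :
    Continuous fun z => (softThresh (x - z) θ - x) ^ 2 := by
  have h0 : Continuous fun z : ℝ => x - z := continuous_const.sub continuous_id
  have h : Continuous fun z : ℝ => softThresh (x - z) θ := (softThresh_continuous hθ).comp h0
  exact (h.sub continuous_const).pow 2

lemma integrand_bound {θ : ℝ} (hθ : 0 ≤ θ) (x z : ℝ) :
    |(softThresh (x + z) θ - x) ^ 2| ≤ 2 * z ^ 2 + 2 * θ ^ 2 := by
  have h := softThresh_sub_abs_le hθ x z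
  rw [abs_of_nonneg (sq_nonneg _)]
  calc (softThresh (x + z) θ - x) ^ 2 = |softThresh (x + z) θ - x| ^ 2 := (sq_abs _).symm
  _ ≤ (|z| + θ) ^ 2 := by nlinarith [abs_nonneg (softThresh (x + z) θ - x), abs_nonneg z]
  _ ≤ 2 * z ^ 2 + 2 * θ ^ 2 := by nlinarith [sq_abs z, sq_nonneg (|z| - θ)]

lemma integrand_bound' {θ : ℝ} (hθ : 0 ≤ θ) (x z : ℝ) :
    |(softThresh (x - z) θ - x) ^ 2| ≤ 2 * z ^ 2 + 2 * θ ^ 2 := by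
  have h := integrand_bound hθ x (-z)
  rw [show x + -z = x - z by ring] at h
  simpa using h

lemma integrable_bound_fn (θ : ℝ) : Integrable (fun z : ℝ => 2 * z ^ 2 + 2 * θ ^ 2) stdGauss :=
  (integrable_sq_stdGauss.const_mul 2).add (integrable_const _)

lemma integrable_integrand {θ : ℝ} (hθ : 0 ≤ θ) (x : ℝ) :
    Integrable (fun z => (softThresh (x + z) θ - x) ^ 2) stdGauss :=
  integrable_of_bound (integrand_cont hθ x) 2 (2 * θ ^ 2) fun z => by
    have := integrand_bound hθ x z; linarith [abs_nonneg ((softThresh (x + z) θ - x) ^ 2)]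

lemma integrable_integrand' {θ : ℝ} (hθ : 0 ≤ θ) (x : ℝ) :
    Integrable (fun z => (softThresh (x - z) θ - x) ^ 2) stdGauss :=
  integrable_of_bound (integrand_cont' hθ x) 2 (2 * θ ^ 2) fun z => by
    have := integrand_bound' hθ x z; linarith [abs_nonneg ((softThresh (x - z) θ - x) ^ 2)]

lemma Hh_nonneg (θ x : ℝ) : 0 ≤ Hh θ x := integral_nonneg fun z => sq_nonneg _

lemma Hh_zero_le {θ : ℝ} (hθ : 0 ≤ θ) : Hh θ 0 ≤ 1 := by
  unfold Hh
  have h : ∀ z : ℝ, (softThresh (0 + z) θ - 0) ^ 2 ≤ z ^ 2 := fun z => by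
    simpa using softThresh_sq_le hθ z
  calc ∫ z, (softThresh (0 + z) θ - 0) ^ 2 ∂stdGauss ≤ ∫ z, z ^ 2 ∂stdGauss :=
        integral_mono (integrable_integrand hθ 0) integrable_sq_stdGauss h
  _ = 1 := integral_sq_stdGauss

lemma Hh_zero_zero : Hh 0 0 = 1 := by
  unfold Hh
  have : ∀ z : ℝ, (softThresh (0 + z) 0 - 0) ^ 2 = z ^ 2 := fun z => by
    rw [zero_add, softThresh_zero, sub_zero]
  rw [integral_congr_ae (ae_of_all _ this), integral_sq_stdGauss]

lemma Hh_sym {θ : ℝ} (hθ : 0 ≤ θ) (x : ℝ) :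
    Hh θ x = ∫ z, ((softThresh (x + z) θ - x) ^ 2 + (softThresh (x - z) θ - x) ^ 2) / 2
      ∂stdGauss := by
  have hswap : ∫ z, (softThresh (x - z) θ - x) ^ 2 ∂stdGauss = Hh θ x := by
    unfold Hh
    have he : (fun z : ℝ => (softThresh (x - z) θ - x) ^ 2)
        = fun z : ℝ => (fun w : ℝ => (softThresh (x + w) θ - x) ^ 2) (-z) := by
      funext z; simp only; rw [show x + -z = x - z by ring]
    rw [he]
    exact integral_comp_neg_stdGauss _ (integrand_cont hθ x).aestronglyMeasurable
  rw [integral_div, integral_add (integrable_integrand hθ x) (integrable_integrand' hθ x), hswap]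
  unfold Hh; ring

lemma integrable_sym {θ : ℝ} (hθ : 0 ≤ θ) (x : ℝ) :
    Integrable (fun z => ((softThresh (x + z) θ - x) ^ 2 + (softThresh (x - z) θ - x) ^ 2) / 2)
      stdGauss :=
  ((integrable_integrand hθ x).add (integrable_integrand' hθ x)).div_const 2

lemma integrable_sq_add (θ : ℝ) : Integrable (fun z : ℝ => z ^ 2 + θ ^ 2) stdGauss :=
  integrable_sq_stdGauss.add (integrable_const _)

lemma Hh_le {θ : ℝ} (hθ : 0 ≤ θ) (x : ℝ) : Hh θ x ≤ 1 + θ ^ 2 := by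
  rw [Hh_sym hθ x, ← integral_sq_add_stdGauss θ]
  refine integral_mono (integrable_sym hθ x) (integrable_sq_add θ) fun z => ?_
  have := key_ineq hθ x z
  simp only
  linarith

lemma Hh_lt {θ : ℝ} (hθ : 0 < θ) (x : ℝ) : Hh θ x < 1 + θ ^ 2 := by
  set D : ℝ → ℝ := fun z => (z ^ 2 + θ ^ 2)
    - ((softThresh (x + z) θ - x) ^ 2 + (softThresh (x - z) θ - x) ^ 2) / 2 with hD
  have hDnn : ∀ z, 0 ≤ D z := fun z => by
    have := key_ineq hθ.le x z
    simp only [hD]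
    linarith
  have hDc : Continuous D :=
    ((continuous_pow 2).add continuous_const).sub
      (((integrand_cont hθ.le x).add (integrand_cont' hθ.le x)).div_const 2)
  have hDint : Integrable D stdGauss := (integrable_sq_add θ).sub (integrable_sym hθ.le x)
  have hval : ∫ z, D z ∂stdGauss = (1 + θ ^ 2) - Hh θ x := by
    simp only [hD]
    rw [integral_sub (integrable_sq_add θ) (integrable_sym hθ.le x),
      integral_sq_add_stdGauss, ← Hh_sym hθ.le x]
  have hpos : 0 < D (-x) := by
    simp only [hD]
    have h1 : x + -x = 0 := by ring
    have h2 : x - -x = x + x := by ring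
    rw [h1, h2]
    have h3 : softThresh 0 θ = 0 := by
      unfold softThresh; rw [Real.sign_zero, zero_mul]
    rw [h3]
    have h4 := key_strict hθ x
    nlinarith
  have hgap : 0 < ∫ z, D z ∂stdGauss := by
    rcases (integral_nonneg (f := D) hDnn).lt_or_eq with h | h
    · exact h
    · exfalso
      have h0 : D =ᵐ[stdGauss] 0 :=
        (integral_eq_zero_iff_of_nonneg hDnn hDint).mp h.symm
      have h0' : D =ᵐ[volume] 0 := volume_ac_stdGauss.ae_eq h0
      have := (hDc.ae_eq_iff_eq volume continuous_const).mp h0'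
      have hcontr := congrFun this (-x)
      rw [hcontr] at hpos
      exact lt_irrefl _ hpos
  linarith [hval ▸ hgap]

lemma Hh_cont {θ : ℝ} (hθ : 0 ≤ θ) : Continuous fun x => Hh θ x := by
  refine continuous_of_dominated (fun x => (integrand_cont hθ x).aestronglyMeasurable)
    (fun x => ae_of_all _ fun z => ?_) (integrable_bound_fn θ) (ae_of_all _ fun z => ?_)
  · rw [Real.norm_eq_abs]
    exact integrand_bound hθ x z
  · have h1 : Continuous fun x : ℝ => x + z := continuous_id.add continuous_const
    exact (((softThresh_continuous hθ).comp h1).sub continuous_id).pow 2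

lemma Hh_tendsto {θ : ℝ} (hθ : 0 ≤ θ) :
    Tendsto (fun x => Hh θ x) atTop (𝓝 (1 + θ ^ 2)) := by
  have hlim : (1 + θ ^ 2) = ∫ z, (z - θ) ^ 2 ∂stdGauss := (integral_sub_sq_stdGauss θ).symm
  rw [hlim]
  refine tendsto_integral_filter_of_dominated_convergence (fun z => 2 * z ^ 2 + 2 * θ ^ 2)
    (Eventually.of_forall fun x => (integrand_cont hθ x).aestronglyMeasurable)
    (Eventually.of_forall fun x => ae_of_all _ fun z => ?_) (integrable_bound_fn θ)
    (ae_of_all _ fun z => ?_)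
  · rw [Real.norm_eq_abs]; exact integrand_bound hθ x z
  · refine Tendsto.congr' ?_ tendsto_const_nhds
    filter_upwards [eventually_ge_atTop (θ - z + 1)] with x hx
    have hxz : θ < x + z := by linarith
    have hst : softThresh (x + z) θ = x + z - θ := by
      rw [softThresh_eq hθ]; unfold clampR
      rw [min_eq_left hxz.le, max_eq_right (by linarith)]
    rw [hst]; ring_nf

lemma Hh_param_cont : Continuous fun θ => Hh θ 0 := by
  rw [continuous_iff_continuousAt]
  intro θ₀
  unfold ContinuousAt Hh
  refine tendsto_integral_filter_of_dominated_convergence (fun z => (|z| + |θ₀| + 1) ^ 2)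
    (Eventually.of_forall fun θ =>
      (((measurable_softThresh θ).comp (measurable_const.add measurable_id)).sub
        measurable_const).pow_const 2 |>.aestronglyMeasurable)
    ?_ ?_ (ae_of_all _ fun z => ?_)
  · filter_upwards [Metric.ball_mem_nhds θ₀ one_pos] with θ hθ
    refine ae_of_all _ fun z => ?_
    rw [Real.norm_eq_abs, abs_of_nonneg (sq_nonneg _)]
    have h1 : |softThresh (0 + z) θ - 0| ≤ |z| + |θ| := by
      rw [zero_add, sub_zero]
      simpa using softThresh_abs_le z θ
    have h2 : |θ| ≤ |θ₀| + 1 := by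
      have := mem_ball_iff_norm.mp hθ
      rw [Real.norm_eq_abs] at this
      cases abs_sub_abs_le_abs_sub θ θ₀ |>.trans this.le |>.lt_or_eq <;>
        cases abs_le.mp (le_refl |θ|) <;> linarith [abs_sub_abs_le_abs_sub θ θ₀,
          (abs_sub_abs_le_abs_sub θ θ₀).trans this.le]
    calc (softThresh (0 + z) θ - 0) ^ 2 = |softThresh (0 + z) θ - 0| ^ 2 := (sq_abs _).symm
    _ ≤ (|z| + |θ₀| + 1) ^ 2 := by
        nlinarith [abs_nonneg (softThresh (0 + z) θ - 0), abs_nonneg z, abs_nonneg θ₀]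
  · have hc : Continuous fun z : ℝ => (|z| + |θ₀| + 1) ^ 2 :=
      ((continuous_abs.add continuous_const).add continuous_const).pow 2
    refine integrable_of_bound hc 2 (2 * (|θ₀| + 1) ^ 2) fun z => ?_
    rw [abs_of_nonneg (sq_nonneg _)]
    nlinarith [sq_abs z, sq_nonneg (|z| - (|θ₀| + 1)), abs_nonneg z, abs_nonneg θ₀]
  · exact ((((softThresh_continuous_param (0 + z)).sub continuous_const).pow 2).tendsto θ₀)

lemma Hh_param_tendsto : Tendsto (fun θ => Hh θ 0) atTop (𝓝 0) := by
  have key : Tendsto (fun θ => Hh θ 0) atTop (𝓝 (∫ _ : ℝ, (0 : ℝ) ∂stdGauss)) := by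
    unfold Hh
    refine tendsto_integral_filter_of_dominated_convergence (fun z => z ^ 2)
      ?_ ?_ integrable_sq_stdGauss (ae_of_all _ fun z => ?_)
    · filter_upwards with θ
      exact (((measurable_softThresh θ).comp (measurable_const.add measurable_id)).sub
          measurable_const).pow_const 2 |>.aestronglyMeasurable
    · filter_upwards [eventually_ge_atTop (0:ℝ)] with θ hθ
      refine ae_of_all _ fun z => ?_
      rw [Real.norm_eq_abs, abs_of_nonneg (sq_nonneg _)]
      simpa using softThresh_sq_le hθ z
    · refine Tendsto.congr' ?_ tendsto_const_nhds
      filter_upwards [eventually_ge_atTop |z|] with θ hθ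
      have h5 : softThresh (0 + z) θ = 0 := by
        unfold softThresh
        rw [max_eq_right (by rw [zero_add]; linarith), mul_zero]
      rw [h5, zero_sub, neg_zero]
      norm_num
  simpa using key

/-! ### Original definitions -/

/-- The class `F_ε` of probability laws on `ℝ` with mass at most `ε` away from `0`. -/
def sparseClass (ε : ℝ) : Set (Measure ℝ) :=
  {F | IsProbabilityMeasure F ∧ F ({0}ᶜ) ≤ ENNReal.ofReal ε}

/-- Soft-thresholding risk at noise level one: `E_F[(η(X+Z;λ) − X)²]`. -/
noncomputable def risk (lam : ℝ) (F : Measure ℝ) : ℝ :=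
  ∫ x, ∫ z, (softThresh (x + z) lam - x) ^ 2 ∂stdGauss ∂F

/-- Minimax soft-thresholding risk `M*(ε)`. -/
noncomputable def Mstar (ε : ℝ) : ℝ :=
  sInf {m | ∃ lam : ℝ, 0 ≤ lam ∧ m = sSup {r | ∃ F ∈ sparseClass ε, r = risk lam F}}

/-- The MSE map `Ψ(σ²; δ, λ, F)`. -/
noncomputable def mseMap (s δ lam : ℝ) (F : Measure ℝ) : ℝ :=
  ∫ x, ∫ z, (softThresh (x + (Real.sqrt s / Real.sqrt δ) * z) (lam * Real.sqrt s) - x) ^ 2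
    ∂stdGauss ∂F

/-- The state-evolution threshold `ρ_SE(δ)` (with optimally tuned `λ`). -/
noncomputable def rhoSE (δ : ℝ) : ℝ :=
  sSup {ρ : ℝ | 0 < ρ ∧ ∃ lam : ℝ, 0 ≤ lam ∧
    ∀ F ∈ sparseClass (ρ * δ), ∀ s ∈ Set.Ioc (0 : ℝ) (∫ x, x ^ 2 ∂F),
      mseMap s δ lam F < s}

/-! ### The explicit worst-case risk -/

noncomputable def Rf (θ ε : ℝ) : ℝ := (1 - min ε 1) * Hh θ 0 + min ε 1 * (1 + θ ^ 2)

lemma risk_eq (lam : ℝ) (F : Measure ℝ) : risk lam F = ∫ x, Hh lam x ∂F := rfl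

/-! ### Splitting integrals at zero -/

lemma prob_toReal_split {F : Measure ℝ} (hPF : IsProbabilityMeasure F) :
    (F {0}).toReal = 1 - (F ({0}ᶜ)).toReal := by
  have h := measure_add_measure_compl (μ := F) (measurableSet_singleton (0:ℝ))
  have h2 := congrArg ENNReal.toReal h
  rw [ENNReal.toReal_add (measure_ne_top F _) (measure_ne_top F _), measure_univ,
    ENNReal.toReal_one] at h2
  linarith

lemma compl_toReal_mem {F : Measure ℝ} (hPF : IsProbabilityMeasure F) :
    0 ≤ (F ({0}ᶜ)).toReal ∧ (F ({0}ᶜ)).toReal ≤ 1 := by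
  constructor
  · exact ENNReal.toReal_nonneg
  · have := prob_le_one (μ := F) (s := {0}ᶜ)
    calc (F ({0}ᶜ)).toReal ≤ (1 : ℝ≥0∞).toReal :=
      ENNReal.toReal_mono ENNReal.one_ne_top this
    _ = 1 := ENNReal.toReal_one

lemma integrable_of_bdd {F : Measure ℝ} (hPF : IsProbabilityMeasure F) {φ : ℝ → ℝ}
    (hφc : Continuous φ) {C : ℝ} (hub : ∀ x, φ x ≤ C) (hlb : ∀ x, 0 ≤ φ x) :
    Integrable φ F := by
  refine (integrable_const C).mono' hφc.aestronglyMeasurable (ae_of_all _ fun x => ?_)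
  rw [Real.norm_eq_abs, abs_of_nonneg (hlb x)]
  exact hub x

lemma integral_split {F : Measure ℝ} (hPF : IsProbabilityMeasure F) {φ : ℝ → ℝ}
    (hφc : Continuous φ) {C : ℝ} (hub : ∀ x, φ x ≤ C) (hlb : ∀ x, 0 ≤ φ x) :
    ∫ x, φ x ∂F = (1 - (F ({0}ᶜ)).toReal) * φ 0 + ∫ x in ({0}ᶜ : Set ℝ), φ x ∂F := by
  have hInt := integrable_of_bdd hPF hφc hub hlb
  have h1 := integral_add_compl (μ := F) (measurableSet_singleton (0:ℝ)) hInt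
  have h2 : ∫ x in ({0} : Set ℝ), φ x ∂F = (1 - (F ({0}ᶜ)).toReal) * φ 0 := by
    rw [← prob_toReal_split hPF]
    rw [show (∫ x in ({0} : Set ℝ), φ x ∂F) = ∫ x, φ x ∂(F.restrict {0}) from rfl,
      Measure.restrict_singleton, integral_smul_measure,
      integral_dirac' φ 0 hφc.stronglyMeasurable, smul_eq_mul]
  linarith

lemma setIntegral_le_bound {F : Measure ℝ} (hPF : IsProbabilityMeasure F) {φ : ℝ → ℝ}
    (hφc : Continuous φ) {C : ℝ} (hub : ∀ x, φ x ≤ C) (hlb : ∀ x, 0 ≤ φ x) :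
    ∫ x in ({0}ᶜ : Set ℝ), φ x ∂F ≤ (F ({0}ᶜ)).toReal * C := by
  have hInt := integrable_of_bdd hPF hφc hub hlb
  have h := setIntegral_mono_on hInt.integrableOn (integrable_const C).integrableOn
    (measurableSet_singleton (0:ℝ)).compl (fun x _ => hub x)
  rw [setIntegral_const, smul_eq_mul] at h
  exact h

lemma setIntegral_lt_bound {F : Measure ℝ} (hPF : IsProbabilityMeasure F) {φ : ℝ → ℝ}
    (hφc : Continuous φ) {C : ℝ} (hub : ∀ x, φ x < C) (hlb : ∀ x, 0 ≤ φ x)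
    (hm : F ({0}ᶜ) ≠ 0) :
    ∫ x in ({0}ᶜ : Set ℝ), φ x ∂F < (F ({0}ᶜ)).toReal * C := by
  have hInt := integrable_of_bdd hPF hφc (fun x => (hub x).le) hlb
  have hψ : IntegrableOn (fun x => C - φ x) ({0}ᶜ : Set ℝ) F := by
    exact ((integrable_const C).sub hInt).integrableOn
  have hpos : 0 < ∫ x in ({0}ᶜ : Set ℝ), (C - φ x) ∂F := by
    rw [setIntegral_pos_iff_support_of_nonneg_ae
      (ae_of_all _ fun x => show (0:ℝ) ≤ C - φ x by linarith [hub x]) hψ]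
    have hsupp : (Function.support fun x => C - φ x) = univ := by
      ext x; simp only [Function.mem_support, mem_univ, iff_true]
      intro h; linarith [hub x]
    rw [hsupp, univ_inter]
    exact hm.bot_lt
  have heq : ∫ x in ({0}ᶜ : Set ℝ), (C - φ x) ∂F
      = (F ({0}ᶜ)).toReal * C - ∫ x in ({0}ᶜ : Set ℝ), φ x ∂F := by
    rw [integral_sub (integrable_const C).integrableOn hInt.integrableOn,
      setIntegral_const, smul_eq_mul]
    rfl
  linarith

lemma integral_lt_Rf {θ ε : ℝ} (hθ : 0 < θ) (hε : 0 ≤ ε) {F : Measure ℝ} (hF : F ∈ sparseClass ε)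
    {φ : ℝ → ℝ} (hφc : Continuous φ) (hφ0 : φ 0 = Hh θ 0)
    (hub : ∀ x, φ x < 1 + θ ^ 2) (hlb : ∀ x, 0 ≤ φ x) (hm : F ({0}ᶜ) ≠ 0) :
    ∫ x, φ x ∂F < Rf θ ε := by
  obtain ⟨hPF, hFε⟩ := hF
  set m := (F ({0}ᶜ)).toReal with hmdef
  obtain ⟨hm0, hm1⟩ := compl_toReal_mem hPF
  have hmε : m ≤ min ε 1 := by
    refine le_min ?_ hm1
    calc m ≤ (ENNReal.ofReal ε).toReal := ENNReal.toReal_mono ENNReal.ofReal_ne_top hFε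
    _ ≤ ε := by rw [ENNReal.toReal_ofReal hε]
  have h1 := integral_split hPF hφc (fun x => (hub x).le) hlb
  have h2 := setIntegral_lt_bound hPF hφc hub hlb hm
  have hH0 : Hh θ 0 ≤ 1 := Hh_zero_le hθ.le
  have hH0' : 0 ≤ Hh θ 0 := Hh_nonneg θ 0
  have hmin1 : min ε 1 ≤ 1 := min_le_right _ _
  unfold Rf
  rw [h1, hφ0]
  have key : (1 - m) * Hh θ 0 + m * (1 + θ ^ 2)
      ≤ (1 - min ε 1) * Hh θ 0 + min ε 1 * (1 + θ ^ 2) := by nlinarith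
  nlinarith

lemma risk_le_Rf {θ ε : ℝ} (hθ : 0 ≤ θ) (hε : 0 ≤ ε) {F : Measure ℝ} (hF : F ∈ sparseClass ε) :
    risk θ F ≤ Rf θ ε := by
  obtain ⟨hPF, hFε⟩ := hF
  set m := (F ({0}ᶜ)).toReal with hmdef
  obtain ⟨hm0, hm1⟩ := compl_toReal_mem hPF
  have hmε : m ≤ min ε 1 := by
    refine le_min ?_ hm1
    calc m ≤ (ENNReal.ofReal ε).toReal := ENNReal.toReal_mono ENNReal.ofReal_ne_top hFε
    _ ≤ ε := by rw [ENNReal.toReal_ofReal hε]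
  have hub : ∀ x, Hh θ x ≤ 1 + θ ^ 2 := Hh_le hθ
  have hlb : ∀ x, 0 ≤ Hh θ x := Hh_nonneg θ
  have h1 := integral_split hPF (Hh_cont hθ) hub hlb
  have h2 := setIntegral_le_bound hPF (Hh_cont hθ) hub hlb
  have hH0 : Hh θ 0 ≤ 1 := Hh_zero_le hθ
  have hH0' : 0 ≤ Hh θ 0 := Hh_nonneg θ 0
  have hmin1 : min ε 1 ≤ 1 := min_le_right _ _
  rw [risk_eq]
  unfold Rf
  rw [h1]
  nlinarith

/-! ### Two-point mixtures -/

noncomputable def mix (w a : ℝ) : Measure ℝ :=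
  ENNReal.ofReal (1 - w) • Measure.dirac 0 + ENNReal.ofReal w • Measure.dirac a

lemma mix_prob {w : ℝ} (hw0 : 0 ≤ w) (hw1 : w ≤ 1) (a : ℝ) :
    IsProbabilityMeasure (mix w a) := by
  constructor
  rw [mix, Measure.add_apply, Measure.smul_apply, Measure.smul_apply, measure_univ, measure_univ,
    smul_eq_mul, smul_eq_mul, mul_one, mul_one, ← ENNReal.ofReal_add (by linarith) hw0]
  norm_num

lemma mix_compl {w : ℝ} (a : ℝ) (ha : a ≠ 0) : (mix w a) ({0}ᶜ) = ENNReal.ofReal w := by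
  rw [mix, Measure.add_apply, Measure.smul_apply, Measure.smul_apply,
    Measure.dirac_apply' _ (measurableSet_singleton (0:ℝ)).compl,
    Measure.dirac_apply' _ (measurableSet_singleton (0:ℝ)).compl]
  simp [indicator, ha]

lemma integrable_dirac_pt {f : ℝ → ℝ} (hf : Continuous f) (b : ℝ) :
    Integrable f (Measure.dirac b) := by
  refine ⟨hf.aestronglyMeasurable, ?_⟩
  have h : (∫⁻ a, (‖f a‖₊ : ℝ≥0∞) ∂Measure.dirac b) < ⊤ := by
    rw [lintegral_dirac]
    exact ENNReal.coe_lt_top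
  exact h

lemma mix_integral {w : ℝ} (hw0 : 0 ≤ w) (hw1 : w ≤ 1) (a : ℝ) {f : ℝ → ℝ}
    (hf : Continuous f) :
    ∫ x, f x ∂(mix w a) = (1 - w) * f 0 + w * f a := by
  rw [mix, integral_add_measure
    ((integrable_dirac_pt hf 0).smul_measure ENNReal.ofReal_ne_top)
    ((integrable_dirac_pt hf a).smul_measure ENNReal.ofReal_ne_top),
    integral_smul_measure, integral_smul_measure,
    integral_dirac' f 0 hf.stronglyMeasurable, integral_dirac' f a hf.stronglyMeasurable,
    ENNReal.toReal_ofReal (by linarith), ENNReal.toReal_ofReal hw0, smul_eq_mul, smul_eq_mul]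

lemma mix_mem_sparseClass {w ε : ℝ} (hw0 : 0 ≤ w) (hw1 : w ≤ 1) (hwε : w ≤ ε) (a : ℝ) :
    mix w a ∈ sparseClass ε := by
  refine ⟨mix_prob hw0 hw1 a, ?_⟩
  by_cases ha : a = 0
  · subst ha
    have : (mix w 0) ({0}ᶜ) = 0 := by
      rw [mix, Measure.add_apply, Measure.smul_apply, Measure.smul_apply,
        Measure.dirac_apply' _ (measurableSet_singleton (0:ℝ)).compl]
      simp [indicator]
    rw [this]
    exact zero_le
  · rw [mix_compl a ha]
    exact ENNReal.ofReal_le_ofReal hwε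

/-! ### The sSup of the risk set -/

lemma riskSet_sSup {θ ε : ℝ} (hθ : 0 ≤ θ) (hε : 0 < ε) :
    sSup {r | ∃ F ∈ sparseClass ε, r = risk θ F} = Rf θ ε := by
  set w := min ε 1 with hw
  have hw0 : 0 < w := lt_min hε one_pos
  have hw1 : w ≤ 1 := min_le_right _ _
  have hwε : w ≤ ε := min_le_left _ _
  refine csSup_eq_of_forall_le_of_forall_lt_exists_gt ?_ ?_ ?_
  · exact ⟨risk θ (mix w 1), mix w 1, mix_mem_sparseClass hw0.le hw1 hwε 1, rfl⟩
  · rintro r ⟨F, hF, rfl⟩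
    exact risk_le_Rf hθ hε.le hF
  · intro t ht
    have hlim : Tendsto (fun a => risk θ (mix w a)) atTop (𝓝 (Rf θ ε)) := by
      have h1 : ∀ a : ℝ, risk θ (mix w a) = (1 - w) * Hh θ 0 + w * Hh θ a := fun a => by
        rw [risk_eq, mix_integral hw0.le hw1 a (Hh_cont hθ)]
      have h2 : Tendsto (fun a => (1 - w) * Hh θ 0 + w * Hh θ a) atTop (𝓝 (Rf θ ε)) := by
        have h3 := (Hh_tendsto hθ).const_mul w
        have h4 := h3.const_add ((1 - w) * Hh θ 0)
        unfold Rf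
        rw [← hw]
        exact h4
      exact h2.congr fun a => (h1 a).symm
    have hev : ∀ᶠ a in (atTop : Filter ℝ), t < risk θ (mix w a) :=
      hlim.eventually (eventually_gt_nhds ht)
    obtain ⟨a, ha⟩ := hev.exists
    exact ⟨risk θ (mix w a), ⟨mix w a, mix_mem_sparseClass hw0.le hw1 hwε a, rfl⟩, ha⟩

/-! ### Rewriting Mstar -/

lemma Mstar_eq {ε : ℝ} (hε : 0 < ε) :
    Mstar ε = sInf {m | ∃ θ : ℝ, 0 ≤ θ ∧ m = Rf θ ε} := by
  unfold Mstar
  congr 1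
  ext m
  constructor
  · rintro ⟨lam, hlam, rfl⟩
    exact ⟨lam, hlam, (riskSet_sSup hlam hε)⟩
  · rintro ⟨lam, hlam, rfl⟩
    exact ⟨lam, hlam, (riskSet_sSup hlam hε).symm⟩

lemma Rf_nonneg {θ ε : ℝ} (hθ : 0 ≤ θ) (hε : 0 ≤ ε) : 0 ≤ Rf θ ε := by
  unfold Rf
  have h1 : 0 ≤ min ε 1 := le_min hε zero_le_one
  have h2 : min ε 1 ≤ 1 := min_le_right _ _
  have := Hh_nonneg θ 0
  nlinarith [sq_nonneg θ]

lemma Mstar_set_nonempty (ε : ℝ) : {m | ∃ θ : ℝ, 0 ≤ θ ∧ m = Rf θ ε}.Nonempty :=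
  ⟨Rf 0 ε, 0, le_rfl, rfl⟩

lemma Mstar_set_bddBelow {ε : ℝ} (hε : 0 ≤ ε) : BddBelow {m | ∃ θ : ℝ, 0 ≤ θ ∧ m = Rf θ ε} := by
  refine ⟨0, fun m hm => ?_⟩
  obtain ⟨θ, hθ, rfl⟩ := hm
  exact Rf_nonneg hθ hε

lemma Mstar_lt_iff {ε d : ℝ} (hε : 0 < ε) : Mstar ε < d ↔ ∃ θ : ℝ, 0 ≤ θ ∧ Rf θ ε < d := by
  rw [Mstar_eq hε, csInf_lt_iff (Mstar_set_bddBelow hε.le) (Mstar_set_nonempty ε)]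
  constructor
  · rintro ⟨b, ⟨θ, hθ, rfl⟩, hlt⟩
    exact ⟨θ, hθ, hlt⟩
  · rintro ⟨θ, hθ, hlt⟩
    exact ⟨Rf θ ε, ⟨θ, hθ, rfl⟩, hlt⟩

/-! ### Scale invariance of the MSE map -/

lemma mseMap_eq {s δ lam : ℝ} (hs : 0 < s) (hδ : 0 < δ) (hlam : 0 ≤ lam) (F : Measure ℝ) :
    mseMap s δ lam F
      = (s / δ) * ∫ x, Hh (lam * Real.sqrt δ) (x / (Real.sqrt s / Real.sqrt δ)) ∂F := by
  have hsq : 0 < Real.sqrt s := Real.sqrt_pos.mpr hs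
  have hsqδ : 0 < Real.sqrt δ := Real.sqrt_pos.mpr hδ
  set c := Real.sqrt s / Real.sqrt δ with hc
  have hcpos : 0 < c := div_pos hsq hsqδ
  set θ := lam * Real.sqrt δ with hθdef
  have hθ : 0 ≤ θ := mul_nonneg hlam (Real.sqrt_nonneg δ)
  have hthresh : lam * Real.sqrt s = c * θ := by
    rw [hc, hθdef]; field_simp
  have hc2 : c ^ 2 = s / δ := by
    rw [hc, div_pow, Real.sq_sqrt hs.le, Real.sq_sqrt hδ.le]
  have hpt : ∀ x z : ℝ, (softThresh (x + c * z) (lam * Real.sqrt s) - x) ^ 2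
      = (s / δ) * ((softThresh (x / c + z) θ - x / c) ^ 2) := by
    intro x z
    rw [hthresh]
    have h1 : x + c * z = c * (x / c + z) := by
      rw [mul_add, mul_comm c (x / c), div_mul_cancel₀ x (ne_of_gt hcpos)]
    rw [h1, softThresh_scale hθ hcpos (x / c + z), ← hc2]
    field_simp
  unfold mseMap
  have hin : ∀ x : ℝ, ∫ z, (softThresh (x + Real.sqrt s / Real.sqrt δ * z)
        (lam * Real.sqrt s) - x) ^ 2 ∂stdGauss = (s / δ) * Hh θ (x / c) := by
    intro x
    unfold Hh
    rw [← integral_const_mul]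
    exact integral_congr_ae (ae_of_all _ fun z => hpt x z)
  rw [← integral_const_mul]
  exact integral_congr_ae (ae_of_all _ fun x => hin x)

/-! ### State evolution characterisation -/

lemma SE_of_Rf_le {δ ρ : ℝ} (hδ : δ ∈ Set.Ioo (0:ℝ) 1) (hρ : 0 < ρ) {θ : ℝ} (hθ : 0 ≤ θ)
    (hRf : Rf θ (ρ * δ) ≤ δ) :
    ∃ lam : ℝ, 0 ≤ lam ∧ ∀ F ∈ sparseClass (ρ * δ), ∀ s ∈ Set.Ioc (0 : ℝ) (∫ x, x ^ 2 ∂F),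
      mseMap s δ lam F < s := by
  obtain ⟨hδ0, hδ1⟩ := hδ
  have hθpos : 0 < θ := by
    rcases hθ.lt_or_eq with h | h
    · exact h
    · exfalso
      rw [← h] at hRf
      unfold Rf at hRf
      rw [Hh_zero_zero] at hRf
      have h1 : min (ρ * δ) 1 ≤ 1 := min_le_right _ _
      nlinarith
  have hsqδ : 0 < Real.sqrt δ := Real.sqrt_pos.mpr hδ0
  refine ⟨θ / Real.sqrt δ, div_nonneg hθ hsqδ.le, ?_⟩
  intro F hF s hsmem
  obtain ⟨hs0, hsle⟩ := hsmem
  have hθback : (θ / Real.sqrt δ) * Real.sqrt δ = θ := by field_simp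
  rw [mseMap_eq hs0 hδ0 (div_nonneg hθ hsqδ.le) F, hθback]
  set c := Real.sqrt s / Real.sqrt δ with hc
  have hcpos : 0 < c := div_pos (Real.sqrt_pos.mpr hs0) hsqδ
  have hPF := hF.1
  have hm : F ({0}ᶜ) ≠ 0 := by
    intro h0
    have hae : ∀ᵐ x ∂F, x = 0 := by
      have hset : {x : ℝ | ¬ x = 0} = ({0}ᶜ : Set ℝ) := by ext x; simp
      rw [ae_iff, hset, h0]
    have hzero : ∫ x, x ^ 2 ∂F = 0 := by
      rw [integral_congr_ae (g := fun _ => (0:ℝ)) ?_, integral_zero]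
      filter_upwards [hae] with x hx
      rw [hx]; norm_num
    rw [hzero] at hsle
    linarith
  have hφc : Continuous fun x => Hh θ (x / c) := (Hh_cont hθ).comp (continuous_id.div_const c)
  have hlt : ∫ x, Hh θ (x / c) ∂F < Rf θ (ρ * δ) :=
    integral_lt_Rf hθpos (by positivity) hF hφc (by rw [zero_div])
      (fun x => Hh_lt hθpos _) (fun x => Hh_nonneg _ _) hm
  calc (s / δ) * ∫ x, Hh θ (x / c) ∂F < (s / δ) * δ :=
        mul_lt_mul_of_pos_left (hlt.trans_le hRf) (by positivity)
  _ = s := by field_simp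

lemma Rf_le_of_SE {δ ρ : ℝ} (hδ : δ ∈ Set.Ioo (0:ℝ) 1) (hρ : 0 < ρ) {lam : ℝ} (hlam : 0 ≤ lam)
    (hSE : ∀ F ∈ sparseClass (ρ * δ), ∀ s ∈ Set.Ioc (0 : ℝ) (∫ x, x ^ 2 ∂F),
      mseMap s δ lam F < s) :
    Rf (lam * Real.sqrt δ) (ρ * δ) ≤ δ := by
  obtain ⟨hδ0, hδ1⟩ := hδ
  by_contra hgt
  push_neg at hgt
  set θ := lam * Real.sqrt δ with hθdef
  have hθ : 0 ≤ θ := mul_nonneg hlam (Real.sqrt_nonneg δ)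
  set ε := ρ * δ with hεdef
  have hε0 : 0 < ε := mul_pos hρ hδ0
  set w := min ε 1 with hw
  have hw0 : 0 < w := lt_min hε0 one_pos
  have hw1 : w ≤ 1 := min_le_right _ _
  have hsqδ : 0 < Real.sqrt δ := Real.sqrt_pos.mpr hδ0
  have hlim : Tendsto (fun a : ℝ => (1 - w) * Hh θ 0 + w * Hh θ (a * Real.sqrt δ)) atTop
      (𝓝 (Rf θ ε)) := by
    have hcomp : Tendsto (fun a : ℝ => a * Real.sqrt δ) atTop atTop :=
      Tendsto.atTop_mul_const hsqδ tendsto_id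
    have h3 := ((Hh_tendsto hθ).comp hcomp).const_mul w
    have h4 := h3.const_add ((1 - w) * Hh θ 0)
    unfold Rf
    rw [← hw]
    exact h4
  have hev1 : ∀ᶠ a : ℝ in atTop, δ < (1 - w) * Hh θ 0 + w * Hh θ (a * Real.sqrt δ) :=
    hlim.eventually (eventually_gt_nhds hgt)
  have hev2 : ∀ᶠ a : ℝ in atTop, 1 ≤ w * a ^ 2 := by
    filter_upwards [eventually_ge_atTop (max 1 (1 / w))] with a ha
    have ha1 : 1 ≤ a := le_trans (le_max_left _ _) ha
    have ha2 : 1 / w ≤ a := le_trans (le_max_right _ _) ha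
    have h5 : 1 / w ≤ a ^ 2 := by nlinarith
    rw [div_le_iff₀ hw0] at h5
    nlinarith
  obtain ⟨a, ha1, ha2⟩ := (hev1.and hev2).exists
  set F := mix w a with hF
  have hFmem : F ∈ sparseClass ε := mix_mem_sparseClass hw0.le hw1 (min_le_left _ _) a
  have hx2 : ∫ x, x ^ 2 ∂F = w * a ^ 2 := by
    rw [hF, mix_integral hw0.le hw1 a (continuous_pow 2)]
    norm_num
  have hsmem : (1:ℝ) ∈ Set.Ioc (0:ℝ) (∫ x, x ^ 2 ∂F) := by
    constructor
    · norm_num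
    · rw [hx2]; linarith
  have hcontr := hSE F hFmem 1 hsmem
  rw [mseMap_eq one_pos hδ0 hlam F] at hcontr
  have hφc : Continuous fun x : ℝ => Hh θ (x / (Real.sqrt 1 / Real.sqrt δ)) :=
    (Hh_cont hθ).comp (continuous_id.div_const _)
  have hint : ∫ x, Hh θ (x / (Real.sqrt 1 / Real.sqrt δ)) ∂F
      = (1 - w) * Hh θ 0 + w * Hh θ (a * Real.sqrt δ) := by
    rw [hF, mix_integral hw0.le hw1 a hφc]
    congr 2
    · rw [zero_div]
    · rw [Real.sqrt_one]
      field_simp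
  rw [hint] at hcontr
  have hfin : (1:ℝ) / δ * ((1 - w) * Hh θ 0 + w * Hh θ (a * Real.sqrt δ)) < 1 := by
    calc (1:ℝ) / δ * ((1 - w) * Hh θ 0 + w * Hh θ (a * Real.sqrt δ)) = 1 / δ *
        ((1 - w) * Hh θ 0 + w * Hh θ (a * Real.sqrt δ)) := rfl
    _ < 1 := by
        have : (1:ℝ) / δ * ((1 - w) * Hh θ 0 + w * Hh θ (a * Real.sqrt δ)) < 1 := hcontr
        exact this
  have hX : δ < (1 - w) * Hh θ 0 + w * Hh θ (a * Real.sqrt δ) := ha1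
  rw [div_mul_eq_mul_div, one_mul, div_lt_one hδ0] at hfin
  linarith

lemma SE_iff {δ ρ : ℝ} (hδ : δ ∈ Set.Ioo (0:ℝ) 1) (hρ : 0 < ρ) :
    (∃ lam : ℝ, 0 ≤ lam ∧ ∀ F ∈ sparseClass (ρ * δ), ∀ s ∈ Set.Ioc (0 : ℝ) (∫ x, x ^ 2 ∂F),
      mseMap s δ lam F < s) ↔ ∃ θ : ℝ, 0 ≤ θ ∧ Rf θ (ρ * δ) ≤ δ := by
  constructor
  · rintro ⟨lam, hlam, hSE⟩
    exact ⟨lam * Real.sqrt δ, mul_nonneg hlam (Real.sqrt_nonneg δ), Rf_le_of_SE hδ hρ hlam hSE⟩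
  · rintro ⟨θ, hθ, hRf⟩
    exact SE_of_Rf_le hδ hρ hθ hRf

/-! ### Monotonicity properties of Rf -/

lemma Rf_strict_mono {θ ε ε' : ℝ} (hθ : 0 < θ) (h : ε < ε') (h1 : ε' ≤ 1) :
    Rf θ ε < Rf θ ε' := by
  unfold Rf
  rw [min_eq_left (h.le.trans h1), min_eq_left h1]
  have h2 : Hh θ 0 ≤ 1 := Hh_zero_le hθ.le
  have h3 : 0 < 1 + θ ^ 2 - Hh θ 0 := by nlinarith [pow_pos hθ 2]
  nlinarith [mul_pos (sub_pos.mpr h) h3]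

lemma Rf_lip {θ ε ε' : ℝ} (hθ : 0 ≤ θ) (h : ε ≤ ε') :
    Rf θ ε' ≤ Rf θ ε + (ε' - ε) * (1 + θ ^ 2) := by
  unfold Rf
  have h1 : min ε' 1 - min ε 1 ≤ ε' - ε := by
    rcases le_total ε' 1 with h2 | h2
    · rw [min_eq_left h2, min_eq_left (h.trans h2)]
    · rw [min_eq_right h2]
      rcases le_total ε 1 with h3 | h3
      · rw [min_eq_left h3]; linarith
      · rw [min_eq_right h3]; linarith
  have hba : 0 ≤ min ε' 1 - min ε 1 := sub_nonneg.mpr (min_le_min h le_rfl)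
  have hc0 : 0 ≤ 1 + θ ^ 2 - Hh θ 0 := by nlinarith [Hh_zero_le hθ, sq_nonneg θ]
  have hc1 : 1 + θ ^ 2 - Hh θ 0 ≤ 1 + θ ^ 2 := by nlinarith [Hh_nonneg θ 0]
  have hprod : (min ε' 1 - min ε 1) * (1 + θ ^ 2 - Hh θ 0) ≤ (ε' - ε) * (1 + θ ^ 2) :=
    mul_le_mul h1 hc1 hc0 (by linarith)
  nlinarith

lemma Rf_ge {θ ε : ℝ} (hθ : 0 ≤ θ) : min ε 1 * (1 + θ ^ 2) ≤ Rf θ ε := by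
  unfold Rf
  nlinarith [mul_nonneg (sub_nonneg.mpr (min_le_right ε 1)) (Hh_nonneg θ 0)]

lemma theta_pos_of_Rf_le {θ ε δ : ℝ} (hδ1 : δ < 1) (hθ : 0 ≤ θ) (h : Rf θ ε ≤ δ) :
    0 < θ := by
  rcases hθ.lt_or_eq with h1 | h1
  · exact h1
  · exfalso
    rw [← h1] at h
    unfold Rf at h
    rw [Hh_zero_zero] at h
    nlinarith [min_le_right ε 1]

lemma eps_le_one_of_Rf_le {θ ε δ : ℝ} (hδ1 : δ < 1) (h : Rf θ ε ≤ δ) : ε ≤ 1 := by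
  by_contra h1
  push_neg at h1
  unfold Rf at h
  rw [min_eq_right h1.le] at h
  nlinarith [sq_nonneg θ]

lemma exists_gt_Rf_le {δ ρ θ : ℝ} (hδ0 : 0 < δ) (hρ : 0 < ρ) (hθ : 0 ≤ θ)
    (h : Rf θ (ρ * δ) < δ) : ∃ ρ', ρ < ρ' ∧ 0 < ρ' ∧ Rf θ (ρ' * δ) ≤ δ := by
  set d := (δ - Rf θ (ρ * δ)) / (δ * (1 + θ ^ 2)) with hd
  have hθ2 : (0:ℝ) < 1 + θ ^ 2 := by positivity
  have hdpos : 0 < d := div_pos (by linarith) (by positivity)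
  refine ⟨ρ + d, by linarith, by linarith, ?_⟩
  have hlip := Rf_lip hθ (show ρ * δ ≤ (ρ + d) * δ by nlinarith)
  have heq : ((ρ + d) * δ - ρ * δ) * (1 + θ ^ 2) = δ - Rf θ (ρ * δ) := by
    rw [hd]
    field_simp
    ring
  linarith

/-! ### Nonemptiness of the SE region -/

lemma exists_mem_T {δ : ℝ} (hδ0 : 0 < δ) (hδ1 : δ < 1) :
    ∃ ρ₀ θ₀ : ℝ, 0 < ρ₀ ∧ 0 ≤ θ₀ ∧ Rf θ₀ (ρ₀ * δ) ≤ δ := by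
  have hev : ∀ᶠ θ : ℝ in atTop, Hh θ 0 < δ / 2 :=
    Hh_param_tendsto.eventually (eventually_lt_nhds (by linarith))
  obtain ⟨θ₀, hθ₀small, hθ₀pos⟩ := (hev.and (eventually_ge_atTop (0:ℝ))).exists
  set ρ₀ := 1 / (2 * (1 + θ₀ ^ 2)) with hρ₀
  have hθ2 : (0:ℝ) < 1 + θ₀ ^ 2 := by positivity
  have hρ₀pos : 0 < ρ₀ := by positivity
  refine ⟨ρ₀, θ₀, hρ₀pos, hθ₀pos, ?_⟩
  have hmle : min (ρ₀ * δ) 1 ≤ ρ₀ * δ := min_le_left _ _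
  have hm0 : 0 ≤ min (ρ₀ * δ) 1 := le_min (by positivity) zero_le_one
  have hm1 : min (ρ₀ * δ) 1 ≤ 1 := min_le_right _ _
  have hρ₀δ : ρ₀ * δ * (1 + θ₀ ^ 2) = δ / 2 := by
    rw [hρ₀]
    field_simp
  unfold Rf
  have hH0 : 0 ≤ Hh θ₀ 0 := Hh_nonneg θ₀ 0
  have key : min (ρ₀ * δ) 1 * (1 + θ₀ ^ 2) ≤ δ / 2 := by
    calc min (ρ₀ * δ) 1 * (1 + θ₀ ^ 2) ≤ ρ₀ * δ * (1 + θ₀ ^ 2) :=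
          mul_le_mul_of_nonneg_right hmle hθ2.le
    _ = δ / 2 := hρ₀δ
  nlinarith [hθ₀small]

/-! ### Main theorem -/

theorem rhoSE_eq_minimax_characterization (δ : ℝ) (hδ : δ ∈ Set.Ioo (0:ℝ) 1) :
    (∀ ρ : ℝ, 0 < ρ → (ρ < rhoSE δ ↔ Mstar (δ * ρ) < δ))
      ∧ Mstar (rhoSE δ * δ) = δ := by
  obtain ⟨hδ0, hδ1⟩ := hδ
  set T : Set ℝ := {ρ : ℝ | 0 < ρ ∧ ∃ θ : ℝ, 0 ≤ θ ∧ Rf θ (ρ * δ) ≤ δ} with hT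
  have hrhoSE : rhoSE δ = sSup T := by
    unfold rhoSE
    congr 1
    ext ρ
    simp only [hT, mem_setOf_eq]
    exact and_congr_right fun hρ => SE_iff ⟨hδ0, hδ1⟩ hρ
  have hTub : ∀ ρ ∈ T, ρ ≤ 1 / δ := by
    rintro ρ ⟨hρpos, θ, hθ, hRf⟩
    have := eps_le_one_of_Rf_le hδ1 hRf
    rw [le_div_iff₀ hδ0]
    linarith
  have hbdd : BddAbove T := ⟨1 / δ, fun ρ hρ => hTub ρ hρ⟩
  obtain ⟨ρ₀, θ₀, hρ₀pos, hθ₀, hRf₀⟩ := exists_mem_T hδ0 hδ1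
  have hρ₀mem : ρ₀ ∈ T := ⟨hρ₀pos, θ₀, hθ₀, hRf₀⟩
  have hTne : T.Nonempty := ⟨ρ₀, hρ₀mem⟩
  have hsup_pos : 0 < sSup T := lt_of_lt_of_le hρ₀pos (le_csSup hbdd hρ₀mem)
  have part1 : ∀ ρ : ℝ, 0 < ρ → (ρ < sSup T ↔ ∃ θ : ℝ, 0 ≤ θ ∧ Rf θ (ρ * δ) < δ) := by
    intro ρ hρ
    constructor
    · intro hlt
      obtain ⟨ρ'', hρ''T, hρρ''⟩ := exists_lt_of_lt_csSup hTne hlt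
      obtain ⟨hρ''pos, θ, hθ, hRf⟩ := hρ''T
      have hθpos : 0 < θ := theta_pos_of_Rf_le hδ1 hθ hRf
      have hle1 : ρ'' * δ ≤ 1 := eps_le_one_of_Rf_le hδ1 hRf
      refine ⟨θ, hθ, ?_⟩
      have hmono : Rf θ (ρ * δ) < Rf θ (ρ'' * δ) :=
        Rf_strict_mono hθpos (by nlinarith) hle1
      linarith
    · rintro ⟨θ, hθ, hRf⟩
      obtain ⟨ρ', hρρ', hρ'pos, hRf'⟩ := exists_gt_Rf_le hδ0 hρ hθ hRf
      have hρ'mem : ρ' ∈ T := ⟨hρ'pos, θ, hθ, hRf'⟩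
      exact lt_of_lt_of_le hρρ' (le_csSup hbdd hρ'mem)
  constructor
  · intro ρ hρ
    rw [hrhoSE, mul_comm δ ρ, Mstar_lt_iff (mul_pos hρ hδ0)]
    exact part1 ρ hρ
  · rw [hrhoSE]
    set ρs := sSup T with hρs
    have hεs : 0 < ρs * δ := mul_pos hsup_pos hδ0
    have hge : ∀ θ : ℝ, 0 ≤ θ → δ ≤ Rf θ (ρs * δ) := by
      intro θ hθ
      by_contra hlt
      push_neg at hlt
      obtain ⟨ρ', hρρ', hρ'pos, hRf'⟩ := exists_gt_Rf_le hδ0 hsup_pos hθ hlt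
      have : ρ' ≤ ρs := le_csSup hbdd ⟨hρ'pos, θ, hθ, hRf'⟩
      linarith
    have h1 : δ ≤ Mstar (ρs * δ) := by
      rw [Mstar_eq hεs]
      refine le_csInf (Mstar_set_nonempty _) ?_
      rintro m ⟨θ, hθ, rfl⟩
      exact hge θ hθ
    have h2 : Mstar (ρs * δ) ≤ δ := by
      refine le_of_forall_pos_le_add ?_
      intro η hη
      set m0 := min (ρs * δ / 2) 1 with hm0def
      have hm0pos : 0 < m0 := lt_min (by positivity) one_pos
      set K := δ / m0 with hKdef
      have hKpos : 0 < K := div_pos hδ0 hm0pos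
      set w := min (ρs / 2) (η / (δ * K)) with hwdef
      have hwpos : 0 < w := lt_min (by positivity) (by positivity)
      obtain ⟨ρ₁, hρ₁T, hρ₁gt⟩ := exists_lt_of_lt_csSup hTne
        (show ρs - w < ρs by linarith)
      have hρ₁le : ρ₁ ≤ ρs := le_csSup hbdd hρ₁T
      obtain ⟨hρ₁pos, θ₁, hθ₁, hRf₁⟩ := hρ₁T
      have hθ₁pos : 0 < θ₁ := theta_pos_of_Rf_le hδ1 hθ₁ hRf₁
      have hρ₁ge : ρs / 2 ≤ ρ₁ := by
        have hw2 : w ≤ ρs / 2 := min_le_left _ _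
        linarith
      have hminle : m0 ≤ min (ρ₁ * δ) 1 := by
        refine min_le_min ?_ le_rfl
        calc ρs * δ / 2 = (ρs / 2) * δ := by ring
        _ ≤ ρ₁ * δ := mul_le_mul_of_nonneg_right hρ₁ge hδ0.le
      have hKθ : 1 + θ₁ ^ 2 ≤ K := by
        have hb : min (ρ₁ * δ) 1 * (1 + θ₁ ^ 2) ≤ δ := le_trans (Rf_ge hθ₁) hRf₁
        have hb2 : m0 * (1 + θ₁ ^ 2) ≤ δ := by
          refine le_trans ?_ hb
          exact mul_le_mul_of_nonneg_right hminle (by positivity)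
        rw [hKdef, le_div_iff₀ hm0pos]
        calc (1 + θ₁ ^ 2) * m0 = m0 * (1 + θ₁ ^ 2) := by ring
        _ ≤ δ := hb2
      have hlip := Rf_lip hθ₁ (show ρ₁ * δ ≤ ρs * δ from
        mul_le_mul_of_nonneg_right hρ₁le hδ0.le)
      have hwK : (ρs * δ - ρ₁ * δ) * (1 + θ₁ ^ 2) ≤ η := by
        have h6 : ρs - ρ₁ ≤ w := by linarith
        have h7 : w ≤ η / (δ * K) := min_le_right _ _
        have h8 : (ρs * δ - ρ₁ * δ) * (1 + θ₁ ^ 2) ≤ w * δ * K := by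
          have e1 : ρs * δ - ρ₁ * δ = (ρs - ρ₁) * δ := by ring
          rw [e1]
          have h9 : (ρs - ρ₁) * δ ≤ w * δ := mul_le_mul_of_nonneg_right h6 hδ0.le
          have h10 : 0 ≤ (ρs - ρ₁) * δ := by nlinarith
          calc (ρs - ρ₁) * δ * (1 + θ₁ ^ 2) ≤ w * δ * (1 + θ₁ ^ 2) :=
                mul_le_mul_of_nonneg_right h9 (by positivity)
          _ ≤ w * δ * K := by
              refine mul_le_mul_of_nonneg_left hKθ (by positivity)
        have h11 : w * δ * K ≤ η := by
          have h12 : w * (δ * K) ≤ (η / (δ * K)) * (δ * K) :=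
            mul_le_mul_of_nonneg_right h7 (by positivity)
          rw [div_mul_cancel₀ η (by positivity : δ * K ≠ 0)] at h12
          calc w * δ * K = w * (δ * K) := by ring
          _ ≤ η := h12
        linarith
      have hfinal : Rf θ₁ (ρs * δ) ≤ δ + η := by linarith
      have hMle : Mstar (ρs * δ) ≤ Rf θ₁ (ρs * δ) := by
        rw [Mstar_eq hεs]
        exact csInf_le (Mstar_set_bddBelow hεs.le) ⟨θ₁, hθ₁, rfl⟩
      linarith
    exact le_antisymm h2 h1
end
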